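/- In the tit-for-tat production dynamic, for every player i and every ℓ ∈ ℕ, x_i(2ℓ+1) ≤ x_i(1) · (v_i·v*)^ℓ, where v* = max_j v_j. -/

import Mathlib

open Filter Finset

theorem stmt_5
(n : ℕ) (x : ℕ → Fin n → ℝ) (y : ℕ → Fin n → Fin n → ℝ) (v : Fin n → ℝ)
    (hv : ∀ j, 0 < v j)
    (hx : ∀ t i, 0 < x t i)
    (hy : ∀ t i j, 0 < y t i j)
    (hsum : ∀ t i, ∑ j, y t i j = 1)
    (hprod : ∀ t i, x (t + 1) i = ∑ j, v j * (y t j i * x t j))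
    (hupd : ∀ t i j, y (t + 1) i j = v j * (y t j i * x t j) / x (t + 1) i)
(vstar : ℝ) (hmax : ∀ j, v j ≤ vstar) (iStar : Fin n) (hiStar : v iStar = vstar)
    (i : Fin n) (l : ℕ) :
    x (2 * l + 1) i ≤ x 1 i * (v i * vstar) ^ l := by
  have hvstar : 0 < vstar := lt_of_lt_of_le (hv iStar) (hmax iStar)
  have key : ∀ t, x (t + 2) i ≤ v i * vstar * x t i := by
    intro t
    have heq : x (t + 2) i = v i * x t i * ∑ j, v j * y t i j := by
      show x (t + 1 + 1) i = _
      rw [hprod]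
      have hterm : ∀ j ∈ univ, v j * (y (t + 1) j i * x (t + 1) j)
          = v i * x t i * (v j * y t i j) := by
        intro j _
        rw [hupd t j i]
        field_simp [(hx (t + 1) j).ne']
      rw [Finset.sum_congr rfl hterm, ← Finset.mul_sum]
    rw [heq]
    have hbound : ∑ j, v j * y t i j ≤ vstar := by
      calc ∑ j, v j * y t i j ≤ ∑ j, vstar * y t i j := by
            apply Finset.sum_le_sum
            intro j _
            exact mul_le_mul_of_nonneg_right (hmax j) (hy t i j).le
        _ = vstar := by rw [← Finset.mul_sum, hsum t i, mul_one]
    calc v i * x t i * ∑ j, v j * y t i j ≤ v i * x t i * vstar := by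
          apply mul_le_mul_of_nonneg_left hbound
          exact mul_nonneg (hv i).le (hx t i).le
      _ = v i * vstar * x t i := by ring
  induction l with
  | zero => simp
  | succ l ih =>
    have h1 : 2 * (l + 1) + 1 = (2 * l + 1) + 2 := by ring
    calc x (2 * (l + 1) + 1) i = x ((2 * l + 1) + 2) i := by rw [h1]
      _ ≤ v i * vstar * x (2 * l + 1) i := key _
      _ ≤ v i * vstar * (x 1 i * (v i * vstar) ^ l) := by
          apply mul_le_mul_of_nonneg_left ih
          exact mul_nonneg (hv i).le hvstar.le
      _ = x 1 i * (v i * vstar) ^ (l + 1) := by ring
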